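/- The integral operator S : L²[0,1] → L²[0,1] defined by (S Ψ)(y) = ∫₀¹ exp(-|y - s|) Ψ(s) ds is injective: if S Ψ = 0 in L²[0,1], then Ψ = 0 almost everywhere. -/

import Mathlib

open MeasureTheory Set Function

/-- If an integrable function on `ℝ` has vanishing integral over every `Ioc` interval,
it vanishes a.e. -/
lemma ae_zero_of_forall_Ioc (G : ℝ → ℝ) (hG : Integrable G)
    (h : ∀ u v : ℝ, u < v → ∫ s in Set.Ioc u v, G s = 0) : G =ᵐ[volume] 0 := by
  have hGm := hG.aemeasurable
  have hfin : ∀ (S : Set ℝ), ∫⁻ x in S, ENNReal.ofReal (G x) ≠ ⊤ := by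
    intro S
    refine ne_of_lt (lt_of_le_of_lt ?_ hG.2)
    calc ∫⁻ x in S, ENNReal.ofReal (G x) ≤ ∫⁻ x, ENNReal.ofReal (G x) :=
          setLIntegral_le_lintegral _ _
      _ ≤ ∫⁻ x, ‖G x‖₊ := by
          refine lintegral_mono fun x => ?_
          rw [← ENNReal.ofReal_coe_nnreal, coe_nnnorm]
          exact ENNReal.ofReal_le_ofReal (le_abs_self _)
  have hfin' : ∀ (S : Set ℝ), ∫⁻ x in S, ENNReal.ofReal (-G x) ≠ ⊤ := by
    intro S
    refine ne_of_lt (lt_of_le_of_lt ?_ hG.2)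
    calc ∫⁻ x in S, ENNReal.ofReal (-G x) ≤ ∫⁻ x, ENNReal.ofReal (-G x) :=
          setLIntegral_le_lintegral _ _
      _ ≤ ∫⁻ x, ‖G x‖₊ := by
          refine lintegral_mono fun x => ?_
          rw [← ENNReal.ofReal_coe_nnreal, coe_nnnorm]
          rw [Real.norm_eq_abs]
          exact ENNReal.ofReal_le_ofReal (neg_le_abs _)
  set μ₁ := volume.withDensity (fun x => ENNReal.ofReal (G x)) with hμ₁
  set μ₂ := volume.withDensity (fun x => ENNReal.ofReal (-G x)) with hμ₂
  have hμ1fin : IsFiniteMeasure μ₁ := isFiniteMeasure_withDensity_ofReal hG.2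
  have hμ2fin : IsFiniteMeasure μ₂ := by
    refine isFiniteMeasure_withDensity_ofReal ?_
    exact hG.neg.2
  have hext : μ₁ = μ₂ := by
    refine Measure.ext_of_Ioc μ₁ μ₂ fun u v huv => ?_
    rw [hμ₁, hμ₂, withDensity_apply _ measurableSet_Ioc, withDensity_apply _ measurableSet_Ioc]
    have h0 := h u v huv
    have hGi : Integrable G (volume.restrict (Set.Ioc u v)) := hG.restrict
    rw [integral_eq_lintegral_pos_part_sub_lintegral_neg_part hGi, sub_eq_zero] at h0
    exact (ENNReal.toReal_eq_toReal_iff' (hfin _) (hfin' _)).mp h0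
  have hae : (fun x => ENNReal.ofReal (G x)) =ᵐ[volume] (fun x => ENNReal.ofReal (-G x)) := by
    refine (withDensity_eq_iff_of_sigmaFinite ?_ ?_).mp hext
    · exact ENNReal.measurable_ofReal.comp_aemeasurable hGm
    · exact ENNReal.measurable_ofReal.comp_aemeasurable hGm.neg
  filter_upwards [hae] with x hx
  show G x = 0
  by_contra hne
  rcases lt_or_gt_of_ne hne with hlt | hgt
  · have : ENNReal.ofReal (G x) = 0 := by simp [ENNReal.ofReal_eq_zero]; linarith
    rw [this] at hx
    have := (ENNReal.ofReal_eq_zero).mp hx.symm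
    simp at hlt this; linarith
  · have : ENNReal.ofReal (-G x) = 0 := by simp [ENNReal.ofReal_eq_zero]; linarith
    rw [this] at hx
    have := (ENNReal.ofReal_eq_zero).mp hx
    linarith

/-- A continuous function which vanishes a.e. on `[0,1]` vanishes everywhere on `[0,1]`. -/
lemma eqzero_of_ae_Icc {f : ℝ → ℝ} (hf : Continuous f)
    (h : f =ᵐ[volume.restrict (Set.Icc (0:ℝ) 1)] 0) :
    ∀ y ∈ Set.Icc (0:ℝ) 1, f y = 0 := by
  intro y hy
  by_contra hne
  have hcont : ContinuousAt f y := hf.continuousAt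
  rw [Metric.continuousAt_iff] at hcont
  obtain ⟨δ, hδ, hball⟩ := hcont |f y| (abs_pos.mpr hne)
  have hne' : ∀ x, |x - y| < δ → f x ≠ 0 := by
    intro x hx h0
    have := hball (show dist x y < δ by simpa [Real.dist_eq] using hx)
    rw [Real.dist_eq, h0, zero_sub, abs_neg] at this
    exact lt_irrefl _ this
  set u := max 0 (y - δ) with hu
  set v := min 1 (y + δ) with hv
  have huv : u < v := by
    rcases hy with ⟨hy0, hy1⟩
    apply max_lt <;> apply lt_min <;> linarith
  have hsub : Set.Ioo u v ⊆ {x | f x ≠ 0} ∩ Set.Icc 0 1 := by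
    intro x ⟨hx1, hx2⟩
    have h1 : 0 ≤ u := le_max_left _ _
    have h2 : v ≤ 1 := min_le_left _ _
    have h3 : y - δ ≤ u := le_max_right _ _
    have h4 : v ≤ y + δ := min_le_right _ _
    refine ⟨hne' x (abs_lt.mpr ⟨by linarith, by linarith⟩), by constructor <;> linarith⟩
  have hnull : volume ({x | f x ≠ 0} ∩ Set.Icc (0:ℝ) 1) = 0 := by
    have := ae_iff.mp h
    rwa [Measure.restrict_apply] at this
    exact (isOpen_ne_fun hf continuous_const).measurableSet
  have := measure_mono (μ := volume) hsub
  rw [hnull] at this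
  simp only [Real.volume_Ioo, nonpos_iff_eq_zero] at this
  rw [ENNReal.ofReal_eq_zero] at this
  linarith

lemma exp_int (s y : ℝ) (hs : s ≤ y) :
    ∫ t in Set.Icc s y, Real.exp (-(2*t)) = (Real.exp (-(2*s)) - Real.exp (-(2*y)))/2 := by
  have hanti : ∀ t : ℝ, HasDerivAt (fun r => -(Real.exp (-(2*r))/2)) (Real.exp (-(2*t))) t := by
    intro t
    have h1 : HasDerivAt (fun r : ℝ => -(2*r)) (-2) t := by
      simpa using ((hasDerivAt_id t).const_mul (-2))
    have h2 := h1.exp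
    have h3 := (h2.div_const 2).neg
    refine h3.congr_deriv ?_
    ring
  rw [integral_Icc_eq_integral_Ioc, ← intervalIntegral.integral_of_le hs,
    intervalIntegral.integral_eq_sub_of_hasDerivAt (fun t _ => hanti t)
      ((Real.continuous_exp.comp (by fun_prop)).intervalIntegrable _ _)]
  ring

/-- Integration by parts / Fubini identity for the primitive. -/
lemma stepB (q : ℝ → ℝ) (hq : IntegrableOn q (Set.Icc 0 1)) {y : ℝ} (hy : y ∈ Set.Icc (0:ℝ) 1) :
    ∫ s in Set.Icc 0 y, Real.exp (-(2*s)) * q s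
      = Real.exp (-(2*y)) * (∫ s in Set.Icc 0 y, q s)
        + 2 * ∫ t in Set.Icc 0 y, Real.exp (-(2*t)) * (∫ s in Set.Icc 0 t, q s) := by
  obtain ⟨hy0, hy1⟩ := hy
  have hqy : IntegrableOn q (Set.Icc 0 y) := hq.mono_set (Set.Icc_subset_Icc_right hy1)
  have hexpc : Continuous fun t : ℝ => Real.exp (-(2*t)) := Real.continuous_exp.comp (by fun_prop)
  have hexpν : Integrable (fun t => Real.exp (-(2*t))) (volume.restrict (Set.Icc 0 y)) :=
    hexpc.integrableOn_Icc
  have hbound : ∀ᵐ s ∂(volume.restrict (Set.Icc (0:ℝ) y)), ‖Real.exp (-(2*s))‖ ≤ 1 := by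
    filter_upwards [ae_restrict_mem measurableSet_Icc] with s hs
    rw [Real.norm_eq_abs, abs_of_pos (Real.exp_pos _)]
    calc Real.exp (-(2*s)) ≤ Real.exp 0 := Real.exp_le_exp.mpr (by linarith [hs.1])
      _ = 1 := Real.exp_zero
  have heq : IntegrableOn (fun s => Real.exp (-(2*s)) * q s) (Set.Icc 0 y) :=
    Integrable.bdd_mul hqy hexpc.aestronglyMeasurable hbound
  have hswap : ∫ t in Set.Icc 0 y, Real.exp (-(2*t)) * (∫ s in Set.Icc 0 t, q s)
      = ∫ s in Set.Icc 0 y, (Real.exp (-(2*s)) - Real.exp (-(2*y)))/2 * q s := by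
    set Φ : ℝ × ℝ → ℝ :=
      {p : ℝ × ℝ | p.1 ≤ p.2}.indicator (fun p => Real.exp (-(2*p.2)) * q p.1) with hΦdef
    have h1 : ∀ t ∈ Set.Icc (0:ℝ) y,
        Real.exp (-(2*t)) * (∫ s in Set.Icc 0 t, q s)
          = ∫ s in Set.Icc 0 y, Φ (s, t) := by
      intro t ht
      have hpt : ∀ s, Φ (s, t) = (Set.Iic t).indicator (fun s => Real.exp (-(2*t)) * q s) s := by
        intro s
        by_cases h : s ≤ t <;> simp [hΦdef, Set.indicator_apply, h]
      simp_rw [hpt]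
      rw [setIntegral_indicator measurableSet_Iic]
      have hI : Set.Icc (0:ℝ) y ∩ Set.Iic t = Set.Icc 0 t := by
        ext x
        constructor
        · rintro ⟨⟨hx0, _⟩, hxt⟩; exact ⟨hx0, hxt⟩
        · rintro ⟨hx0, hxt⟩; exact ⟨⟨hx0, hxt.trans ht.2⟩, hxt⟩
      rw [hI, integral_const_mul]
    rw [setIntegral_congr_fun measurableSet_Icc h1]
    have hInt : Integrable (uncurry fun t s => Φ (s, t))
        ((volume.restrict (Set.Icc (0:ℝ) y)).prod (volume.restrict (Set.Icc (0:ℝ) y))) := by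
      have hbase : Integrable (fun p : ℝ × ℝ => Real.exp (-(2*p.1)) * q p.2)
          ((volume.restrict (Set.Icc (0:ℝ) y)).prod (volume.restrict (Set.Icc (0:ℝ) y))) :=
        Integrable.mul_prod hexpν hqy
      have hset : MeasurableSet {p : ℝ × ℝ | p.2 ≤ p.1} :=
        measurableSet_le measurable_snd measurable_fst
      have hfe : (uncurry fun t s => Φ (s, t))
          = {p : ℝ × ℝ | p.2 ≤ p.1}.indicator (fun p => Real.exp (-(2*p.1)) * q p.2) := by
        funext p
        rcases p with ⟨t, s⟩
        by_cases h : s ≤ t <;> simp [uncurry, hΦdef, Set.indicator_apply, h]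
      rw [hfe]
      exact hbase.indicator hset
    rw [integral_integral_swap hInt]
    refine setIntegral_congr_fun measurableSet_Icc fun s hs => ?_
    have hpt : ∀ t, Φ (s, t) = (Set.Ici s).indicator (fun t => Real.exp (-(2*t)) * q s) t := by
      intro t
      by_cases h : s ≤ t <;> simp [hΦdef, Set.indicator_apply, h]
    simp_rw [hpt]
    rw [setIntegral_indicator measurableSet_Ici]
    have hI : Set.Icc (0:ℝ) y ∩ Set.Ici s = Set.Icc s y := by
      ext x
      constructor
      · rintro ⟨⟨_, hxy⟩, hxs⟩; exact ⟨hxs, hxy⟩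
      · rintro ⟨hxs, hxy⟩; exact ⟨⟨hs.1.trans hxs, hxy⟩, hxs⟩
    rw [hI, integral_mul_const, exp_int s y hs.2]
  rw [hswap]
  have hsplit : ∫ s in Set.Icc 0 y, (Real.exp (-(2*s)) - Real.exp (-(2*y)))/2 * q s
      = (∫ s in Set.Icc 0 y, Real.exp (-(2*s)) * q s)/2
        - Real.exp (-(2*y))/2 * (∫ s in Set.Icc 0 y, q s) := by
    rw [setIntegral_congr_fun measurableSet_Icc
      (show Set.EqOn (fun s => (Real.exp (-(2*s)) - Real.exp (-(2*y)))/2 * q s)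
        (fun s => (1/2) * (Real.exp (-(2*s)) * q s) - (Real.exp (-(2*y))/2) * q s) (Set.Icc 0 y)
        from fun s _ => by ring)]
    rw [integral_sub ((heq.const_mul _)) (hqy.const_mul _), integral_const_mul, integral_const_mul]
    ring
  rw [hsplit]
  ring

/-- The integral operator `S` with kernel `exp (-|y - s|)` is injective: if
`Ψ ∈ L²[0,1]` and `S Ψ = 0` in `L²[0,1]` (i.e. the integral vanishes for a.e. `y`),
then `Ψ = 0` almost everywhere on `[0,1]`. -/
theorem hilbertSchmidt_operator_injective
    (Ψ : ℝ → ℝ) (hΨ : MemLp Ψ 2 (volume.restrict (Set.Icc (0 : ℝ) 1)))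
    (h0 : (fun y : ℝ => ∫ s in Set.Icc (0 : ℝ) 1, Real.exp (-|y - s|) * Ψ s)
        =ᵐ[volume.restrict (Set.Icc (0 : ℝ) 1)] 0) :
    Ψ =ᵐ[volume.restrict (Set.Icc (0 : ℝ) 1)] 0 := by
  have hΨi : IntegrableOn Ψ (Set.Icc 0 1) volume := hΨ.integrable one_le_two
  have hq : IntegrableOn (fun s => Real.exp s * Ψ s) (Set.Icc 0 1) volume := by
    refine Integrable.bdd_mul (c := Real.exp 1) hΨi Real.continuous_exp.aestronglyMeasurable ?_
    filter_upwards [ae_restrict_mem measurableSet_Icc] with s hs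
    rw [Real.norm_eq_abs, abs_of_pos (Real.exp_pos _)]
    exact Real.exp_le_exp.mpr hs.2
  have hq' : IntegrableOn (fun s => Real.exp (-s) * Ψ s) (Set.Icc 0 1) volume := by
    refine Integrable.bdd_mul (c := 1) hΨi
      (Real.continuous_exp.comp continuous_neg).aestronglyMeasurable ?_
    filter_upwards [ae_restrict_mem measurableSet_Icc] with s hs
    rw [Real.norm_eq_abs, abs_of_pos (Real.exp_pos _)]
    calc Real.exp (-s) ≤ Real.exp 0 := Real.exp_le_exp.mpr (by linarith [hs.1])
      _ = 1 := Real.exp_zero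
  set g : ℝ → ℝ := (Set.Icc (0:ℝ) 1).indicator (fun s => Real.exp s * Ψ s) with hgdef
  set g' : ℝ → ℝ := (Set.Icc (0:ℝ) 1).indicator (fun s => Real.exp (-s) * Ψ s) with hg'def
  have hg : Integrable g volume := (integrable_indicator_iff measurableSet_Icc).mpr hq
  have hg' : Integrable g' volume := (integrable_indicator_iff measurableSet_Icc).mpr hq'
  set A : ℝ → ℝ := fun z => ∫ t in (0:ℝ)..z, g t with hAdef
  set C : ℝ → ℝ := fun z => ∫ t in (0:ℝ)..z, g' t with hCdef
  have hAcont : Continuous A := intervalIntegral.continuous_primitive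
    (fun a b => hg.intervalIntegrable) 0
  have hA : ∀ y ∈ Set.Icc (0:ℝ) 1, A y = ∫ s in Set.Icc 0 y, Real.exp s * Ψ s := by
    intro y hy
    rw [hAdef]
    simp only
    rw [intervalIntegral.integral_of_le hy.1, integral_Icc_eq_integral_Ioc, hgdef]
    refine setIntegral_congr_fun measurableSet_Ioc fun s hs => ?_
    have hmem : s ∈ Set.Icc (0:ℝ) 1 := ⟨hs.1.le, hs.2.trans hy.2⟩
    exact Set.indicator_of_mem hmem _
  have hC : ∀ y ∈ Set.Icc (0:ℝ) 1, C y = ∫ s in Set.Icc 0 y, Real.exp (-s) * Ψ s := by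
    intro y hy
    rw [hCdef]
    simp only
    rw [intervalIntegral.integral_of_le hy.1, integral_Icc_eq_integral_Ioc, hg'def]
    refine setIntegral_congr_fun measurableSet_Ioc fun s hs => ?_
    have hmem : s ∈ Set.Icc (0:ℝ) 1 := ⟨hs.1.le, hs.2.trans hy.2⟩
    exact Set.indicator_of_mem hmem _
  have hCdiff : ∀ y ∈ Set.Icc (0:ℝ) 1, C 1 - C y = ∫ s in Set.Ioc y 1, Real.exp (-s) * Ψ s := by
    intro y hy
    rw [hCdef]
    simp only
    rw [intervalIntegral.integral_interval_sub_left (hg'.intervalIntegrable)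
      (hg'.intervalIntegrable), intervalIntegral.integral_of_le hy.2, hg'def]
    refine setIntegral_congr_fun measurableSet_Ioc fun s hs => ?_
    have hmem : s ∈ Set.Icc (0:ℝ) 1 := ⟨hy.1.trans hs.1.le, hs.2⟩
    exact Set.indicator_of_mem hmem _
  -- Step A: the kernel equation, rewritten in terms of A and C
  have key : ∀ᵐ y ∂(volume.restrict (Set.Icc (0:ℝ) 1)),
      Real.exp (-(2*y)) * A y - C y + C 1 = 0 := by
    filter_upwards [h0, ae_restrict_mem measurableSet_Icc] with y hFy hy
    obtain ⟨hy0, hy1⟩ := hy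
    have hFy' : ∫ s in Set.Icc (0:ℝ) 1, Real.exp (-|y - s|) * Ψ s = 0 := hFy
    have hker : IntegrableOn (fun s => Real.exp (-|y - s|) * Ψ s) (Set.Icc 0 1) volume := by
      refine Integrable.bdd_mul (c := 1) hΨi
        (Real.continuous_exp.comp (continuous_const.sub continuous_id).abs.neg).aestronglyMeasurable ?_
      refine Filter.Eventually.of_forall fun s => ?_
      rw [Real.norm_eq_abs, abs_of_pos (Real.exp_pos _)]
      calc Real.exp (-|y - s|) ≤ Real.exp 0 :=
            Real.exp_le_exp.mpr (neg_nonpos.mpr (abs_nonneg _))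
        _ = 1 := Real.exp_zero
    have hsplit : (∫ s in Set.Icc (0:ℝ) y, Real.exp (-|y - s|) * Ψ s)
        + ∫ s in Set.Ioc y 1, Real.exp (-|y - s|) * Ψ s = 0 := by
      rw [← setIntegral_union (Set.disjoint_left.mpr fun s hs hs' => (not_lt.mpr hs.2) hs'.1)
        measurableSet_Ioc (hker.mono_set (Set.Icc_subset_Icc_right hy1))
        (hker.mono_set (fun s hs => ⟨hy0.trans hs.1.le, hs.2⟩)),
        Set.Icc_union_Ioc_eq_Icc hy0 hy1]
      exact hFy'
    have h1 : ∫ s in Set.Icc (0:ℝ) y, Real.exp (-|y - s|) * Ψ s = Real.exp (-y) * A y := by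
      rw [hA y ⟨hy0, hy1⟩, ← integral_const_mul]
      refine setIntegral_congr_fun measurableSet_Icc fun s hs => ?_
      rw [abs_of_nonneg (by linarith [hs.2] : (0:ℝ) ≤ y - s)]
      rw [show Real.exp (-(y - s)) = Real.exp (-y) * Real.exp s by rw [← Real.exp_add]; ring_nf]
      ring
    have h2 : ∫ s in Set.Ioc y 1, Real.exp (-|y - s|) * Ψ s = Real.exp y * (C 1 - C y) := by
      rw [hCdiff y ⟨hy0, hy1⟩, ← integral_const_mul]
      refine setIntegral_congr_fun measurableSet_Ioc fun s hs => ?_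
      rw [abs_of_nonpos (by linarith [hs.1] : y - s ≤ 0), neg_neg]
      rw [show Real.exp (y - s) = Real.exp y * Real.exp (-s) by rw [← Real.exp_add]; ring_nf]
      ring
    rw [h1, h2] at hsplit
    have hprod : Real.exp (-y) * Real.exp y = 1 := by rw [← Real.exp_add]; simp
    have e2 : Real.exp (-(2*y)) = Real.exp (-y) * Real.exp (-y) := by
      rw [← Real.exp_add]; ring_nf
    linear_combination A y * e2 + Real.exp (-y) * hsplit - (C 1 - C y) * hprod
  -- The primitive H of exp(-2t) A t
  set H : ℝ → ℝ := fun z => ∫ t in (0:ℝ)..z, Real.exp (-(2*t)) * A t with hHdef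
  have hcH : Continuous fun t : ℝ => Real.exp (-(2*t)) * A t :=
    (Real.continuous_exp.comp (by fun_prop)).mul hAcont
  have hHcont : Continuous H := intervalIntegral.continuous_primitive
    (fun a b => hcH.intervalIntegrable a b) 0
  have hkey2 : ∀ᵐ y ∂(volume.restrict (Set.Icc (0:ℝ) 1)), 2 * H y - C 1 = 0 := by
    filter_upwards [key, ae_restrict_mem measurableSet_Icc] with y hk hy
    have hB := stepB (fun s => Real.exp s * Ψ s) hq hy
    have hHy : H y = ∫ t in Set.Icc 0 y,
        Real.exp (-(2*t)) * (∫ s in Set.Icc 0 t, Real.exp s * Ψ s) := by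
      rw [hHdef]
      simp only
      rw [intervalIntegral.integral_of_le hy.1, integral_Icc_eq_integral_Ioc]
      refine setIntegral_congr_fun measurableSet_Ioc fun t ht => ?_
      rw [hA t ⟨ht.1.le, ht.2.trans hy.2⟩]
    have hLHS : ∫ s in Set.Icc (0:ℝ) y, Real.exp (-(2*s)) * (Real.exp s * Ψ s) = C y := by
      rw [hC y hy]
      refine setIntegral_congr_fun measurableSet_Icc fun s hs => ?_
      rw [← mul_assoc,
        show Real.exp (-(2*s)) * Real.exp s = Real.exp (-s) by rw [← Real.exp_add]; ring_nf]
    rw [hLHS, ← hA y hy, ← hHy] at hB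
    linarith
  have hHeq : ∀ y ∈ Set.Icc (0:ℝ) 1, 2 * H y - C 1 = 0 := by
    refine eqzero_of_ae_Icc ((continuous_const.mul hHcont).sub continuous_const) ?_
    filter_upwards [hkey2] with y hy using hy
  have hC1 : C 1 = 0 := by
    have h00 := hHeq 0 (Set.left_mem_Icc.mpr zero_le_one)
    have hH00 : H 0 = 0 := intervalIntegral.integral_same
    rw [hH00] at h00; linarith
  have hH0 : ∀ y ∈ Set.Icc (0:ℝ) 1, H y = 0 := fun y hy => by
    have := hHeq y hy; rw [hC1] at this; linarith
  have hAzero : ∀ y ∈ Set.Ioo (0:ℝ) 1, A y = 0 := by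
    intro y hy
    have hd : HasDerivAt H (Real.exp (-(2*y)) * A y) y := by
      refine intervalIntegral.integral_hasDerivAt_right (hcH.intervalIntegrable _ _)
        (hcH.stronglyMeasurableAtFilter _ _) hcH.continuousAt
    have hzero : H =ᶠ[nhds y] fun _ => 0 := by
      filter_upwards [Ioo_mem_nhds hy.1 hy.2] with x hx
      exact hH0 x ⟨hx.1.le, hx.2.le⟩
    have hd0 : HasDerivAt H 0 y := (hasDerivAt_const y (0:ℝ)).congr_of_eventuallyEq hzero
    have huniq := hd.unique hd0
    rcases mul_eq_zero.mp huniq with h | h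
    · exact absurd h (Real.exp_ne_zero _)
    · exact h
  have hAzero' : ∀ y ∈ Set.Icc (0:ℝ) 1, A y = 0 := by
    have hclosed : IsClosed {z : ℝ | A z = 0} := isClosed_eq hAcont continuous_const
    intro y hy
    have hsub : Set.Icc (0:ℝ) 1 ⊆ {z | A z = 0} := by
      rw [← closure_Ioo (by norm_num : (0:ℝ) ≠ 1)]
      exact closure_minimal (fun x hx => hAzero x hx) hclosed
    exact hsub hy
  have hAall : ∀ y : ℝ, A y = 0 := by
    intro y
    rcases le_or_gt y 0 with h | h
    · have hy0 : A y = -(∫ t in Set.Ioc y 0, g t) := by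
        rw [hAdef]
        simp only
        rw [intervalIntegral.integral_symm, intervalIntegral.integral_of_le h]
      rw [hy0, integral_Ioc_eq_integral_Ioo,
        setIntegral_congr_fun measurableSet_Ioo
          (fun s hs => Set.indicator_of_notMem (fun hmem => absurd hmem.1 (not_le.mpr hs.2)) _)]
      simp
    · rcases le_or_gt y 1 with h1 | h1
      · exact hAzero' y ⟨h.le, h1⟩
      · have hA1 : A 1 = 0 := hAzero' 1 (Set.right_mem_Icc.mpr zero_le_one)
        have hy1 : A y = A 1 + ∫ t in Set.Ioc 1 y, g t := by
          rw [hAdef]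
          simp only
          rw [← intervalIntegral.integral_add_adjacent_intervals
            (hg.intervalIntegrable (a := 0) (b := 1)) (hg.intervalIntegrable (a := 1) (b := y)),
            intervalIntegral.integral_of_le h1.le]
        rw [hy1, hA1,
          setIntegral_congr_fun measurableSet_Ioc
            (fun s hs => Set.indicator_of_notMem (fun hmem => absurd hmem.2 (not_le.mpr hs.1)) _)]
        simp
  have hIoc : ∀ u v : ℝ, u < v → ∫ s in Set.Ioc u v, g s = 0 := by
    intro u v huv
    have heq : ∫ s in Set.Ioc u v, g s = A v - A u := by
      rw [hAdef]
      simp only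
      rw [← intervalIntegral.integral_of_le huv.le,
        intervalIntegral.integral_interval_sub_left (hg.intervalIntegrable (a := 0) (b := v))
          (hg.intervalIntegrable (a := 0) (b := u))]
    rw [heq, hAall, hAall, sub_zero]
  have hgz : g =ᵐ[volume] 0 := ae_zero_of_forall_Ioc g hg hIoc
  have hgz' : ∀ᵐ x ∂(volume.restrict (Set.Icc (0:ℝ) 1)), g x = 0 := ae_restrict_of_ae hgz
  filter_upwards [hgz', ae_restrict_mem measurableSet_Icc] with x hx hmem
  show Ψ x = 0
  have hval : Real.exp x * Ψ x = 0 := by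
    rw [← Set.indicator_of_mem hmem (fun s => Real.exp s * Ψ s)]
    exact hx
  rcases mul_eq_zero.mp hval with h | h
  · exact absurd h (Real.exp_ne_zero _)
  · exact h
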